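/- Define φ, ψ : ℚ → ℚ as follows: for x ∈ ℚ with n = ⌊x⌋ and t = x − ⌊x⌋, set φ(x) = n − (4 − 11t)/(3 − 8t) if t ≤ 1/3 and φ(x) = n + t/(1 − 4t) if t > 1/3; set ψ(x) = n + (4 − 5t)/(3 − 4t) if t ≤ 2/3 and ψ(x) = n + (12 − 19t)/(5 − 8t) if t > 2/3. Then φ and ψ are mutually inverse bijections of ℚ: ψ(φ(x)) = x and φ(ψ(x)) = x for all x ∈ ℚ. -/

import Mathlib

/-- The slope transformation `φ : ℚ → ℚ` realizing the loop functor `[−1]` on slopes: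
for `x` with integer part `n = ⌊x⌋` and fractional part `t = x − ⌊x⌋`,
`φ(x) = n − (4 − 11t)/(3 − 8t)` if `t ≤ 1/3` and `φ(x) = n + t/(1 − 4t)` else. -/
def φq (x : ℚ) : ℚ :=
  let n : ℤ := ⌊x⌋
  let t : ℚ := x - ⌊x⌋
  if t ≤ 1 / 3 then n - (4 - 11 * t) / (3 - 8 * t) else n + t / (1 - 4 * t)

/-- The slope transformation `ψ : ℚ → ℚ` realizing the suspension functor `[1]` on slopes:
`ψ(x) = ⌊x⌋ + (4 − 5t)/(3 − 4t)` if `t = x − ⌊x⌋ ≤ 2/3` and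
`ψ(x) = ⌊x⌋ + (12 − 19t)/(5 − 8t)` else. -/
def ψq (x : ℚ) : ℚ :=
  let n : ℤ := ⌊x⌋
  let t : ℚ := x - ⌊x⌋
  if t ≤ 2 / 3 then n + (4 - 5 * t) / (3 - 4 * t) else n + (12 - 19 * t) / (5 - 8 * t)

lemma floor_add_eq (m : ℤ) (s : ℚ) (h0 : 0 ≤ s) (h1 : s < 1) : ⌊(m:ℚ) + s⌋ = m := by
  rw [add_comm, Int.floor_add_intCast, Int.floor_eq_zero_iff.mpr ⟨h0, h1⟩, zero_add]

lemma phi_eval (m : ℤ) (s : ℚ) (h0 : 0 ≤ s) (h1 : s < 1) :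
    φq ((m:ℚ) + s) =
      if s ≤ 1/3 then (m:ℚ) - (4 - 11*s)/(3 - 8*s) else (m:ℚ) + s/(1 - 4*s) := by
  simp only [φq, floor_add_eq m s h0 h1, add_sub_cancel_left]

lemma psi_eval (m : ℤ) (s : ℚ) (h0 : 0 ≤ s) (h1 : s < 1) :
    ψq ((m:ℚ) + s) =
      if s ≤ 2/3 then (m:ℚ) + (4 - 5*s)/(3 - 4*s) else (m:ℚ) + (12 - 19*s)/(5 - 8*s) := by
  simp only [ψq, floor_add_eq m s h0 h1, add_sub_cancel_left]

lemma psi_phi (n : ℤ) (t : ℚ) (ht0 : 0 ≤ t) (ht1 : t < 1) :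
    ψq (φq ((n:ℚ) + t)) = (n:ℚ) + t := by
  rw [phi_eval n t ht0 ht1]
  by_cases hz : t = 0
  · subst hz
    rw [if_pos (by norm_num)]
    have e : (n:ℚ) - (4 - 11*0)/(3 - 8*0) = ((n-2:ℤ):ℚ) + 2/3 := by push_cast; ring
    rw [e, psi_eval _ _ (by norm_num) (by norm_num), if_pos (by norm_num)]
    push_cast; ring
  · have htp : 0 < t := ht0.lt_of_ne (Ne.symm hz)
    by_cases h13 : t ≤ 1/3
    · by_cases he : t = 1/3
      · subst he
        rw [if_pos le_rfl]
        have e : (n:ℚ) - (4 - 11*(1/3:ℚ))/(3 - 8*(1/3:ℚ)) = ((n-1:ℤ):ℚ) + 0 := by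
          push_cast; norm_num
        rw [e, psi_eval _ _ le_rfl (by norm_num), if_pos (by norm_num)]
        push_cast; ring
      · have hlt : t < 1/3 := lt_of_le_of_ne h13 he
        have hd : (0:ℚ) < 3 - 8*t := by linarith
        rw [if_pos h13]
        have e : (n:ℚ) - (4 - 11*t)/(3 - 8*t) = ((n-2:ℤ):ℚ) + (2 - 5*t)/(3 - 8*t) := by
          push_cast; field_simp [hd.ne', show (3:ℚ) - t*8 ≠ 0 by linarith]; ring
        have hs23 : 2/3 < (2 - 5*t)/(3 - 8*t) := by
          rw [lt_div_iff₀ hd]; linarith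
        have hs1 : (2 - 5*t)/(3 - 8*t) < 1 := by
          rw [div_lt_one hd]; linarith
        rw [e, psi_eval _ _ (by linarith) hs1, if_neg (not_le.mpr hs23)]
        have hd2 : 5 - 8*((2 - 5*t)/(3 - 8*t)) < 0 := by linarith
        push_cast
        rw [show ∀ a b c : ℚ, a + b = c ↔ b = c - a from fun a b c => by constructor <;> intro h <;> linarith]
        rw [div_eq_iff hd2.ne]
        field_simp [hd.ne', show (3:ℚ) - t*8 ≠ 0 by linarith]
        ring
    · have hgt : 1/3 < t := not_le.mp h13
      have hd : 1 - 4*t < 0 := by linarith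
      rw [if_neg h13]
      have e : (n:ℚ) + t/(1 - 4*t) = ((n-1:ℤ):ℚ) + (1 - 3*t)/(1 - 4*t) := by
        push_cast; field_simp [hd.ne, show (1:ℚ) - t*4 ≠ 0 by linarith]; ring
      have hs0 : 0 ≤ (1 - 3*t)/(1 - 4*t) := by
        rw [le_div_iff_of_neg hd]; linarith
      have hs23 : (1 - 3*t)/(1 - 4*t) ≤ 2/3 := by
        rw [div_le_iff_of_neg hd]; linarith
      have hs1 : (1 - 3*t)/(1 - 4*t) < 1 := by
        rw [div_lt_iff_of_neg hd]; linarith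
      rw [e, psi_eval _ _ hs0 hs1, if_pos hs23]
      have hd2 : 0 < 3 - 4*((1 - 3*t)/(1 - 4*t)) := by linarith
      push_cast
      rw [show ∀ a b c : ℚ, a + b = c ↔ b = c - a from fun a b c => by constructor <;> intro h <;> linarith]
      rw [div_eq_iff hd2.ne']
      field_simp [hd.ne, show (1:ℚ) - t*4 ≠ 0 by linarith]
      ring

lemma phi_psi (n : ℤ) (t : ℚ) (ht0 : 0 ≤ t) (ht1 : t < 1) :
    φq (ψq ((n:ℚ) + t)) = (n:ℚ) + t := by
  rw [psi_eval n t ht0 ht1]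
  by_cases hz : t = 0
  · subst hz
    rw [if_pos (by norm_num)]
    have e : (n:ℚ) + (4 - 5*0)/(3 - 4*0) = ((n+1:ℤ):ℚ) + 1/3 := by push_cast; ring
    rw [e, phi_eval _ _ (by norm_num) (by norm_num), if_pos le_rfl]
    push_cast; ring
  · have htp : 0 < t := ht0.lt_of_ne (Ne.symm hz)
    by_cases h23 : t ≤ 2/3
    · by_cases he : t = 2/3
      · subst he
        rw [if_pos le_rfl]
        have e : (n:ℚ) + (4 - 5*(2/3:ℚ))/(3 - 4*(2/3:ℚ)) = ((n+2:ℤ):ℚ) + 0 := by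
          push_cast; norm_num
        rw [e, phi_eval _ _ le_rfl (by norm_num), if_pos (by norm_num)]
        push_cast; ring
      · have hlt : t < 2/3 := lt_of_le_of_ne h23 he
        have hd : (0:ℚ) < 3 - 4*t := by linarith
        rw [if_pos h23]
        have e : (n:ℚ) + (4 - 5*t)/(3 - 4*t) = ((n+1:ℤ):ℚ) + (1 - t)/(3 - 4*t) := by
          push_cast; field_simp [hd.ne', show (3:ℚ) - t*4 ≠ 0 by linarith]; ring
        have hs13 : 1/3 < (1 - t)/(3 - 4*t) := by
          rw [lt_div_iff₀ hd]; linarith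
        have hs1 : (1 - t)/(3 - 4*t) < 1 := by
          rw [div_lt_one hd]; linarith
        rw [e, phi_eval _ _ (by linarith) hs1, if_neg (not_le.mpr hs13)]
        have hd2 : 1 - 4*((1 - t)/(3 - 4*t)) < 0 := by linarith
        push_cast
        rw [show ∀ a b c : ℚ, a + b = c ↔ b = c - a from fun a b c => by constructor <;> intro h <;> linarith]
        rw [div_eq_iff hd2.ne]
        field_simp [hd.ne', show (3:ℚ) - t*4 ≠ 0 by linarith]
        ring
    · have hgt : 2/3 < t := not_le.mp h23
      have hd : 5 - 8*t < 0 := by linarith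
      rw [if_neg h23]
      have e : (n:ℚ) + (12 - 19*t)/(5 - 8*t) = ((n+2:ℤ):ℚ) + (2 - 3*t)/(5 - 8*t) := by
        push_cast; field_simp [hd.ne, show (5:ℚ) - t*8 ≠ 0 by linarith]; ring
      have hs0 : 0 ≤ (2 - 3*t)/(5 - 8*t) := by
        rw [le_div_iff_of_neg hd]; linarith
      have hs13 : (2 - 3*t)/(5 - 8*t) ≤ 1/3 := by
        rw [div_le_iff_of_neg hd]; linarith
      have hs1 : (2 - 3*t)/(5 - 8*t) < 1 := by
        rw [div_lt_iff_of_neg hd]; linarith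
      rw [e, phi_eval _ _ hs0 hs1, if_pos hs13]
      have hd2 : 0 < 3 - 8*((2 - 3*t)/(5 - 8*t)) := by linarith
      push_cast
      rw [show ∀ a b c : ℚ, a - b = c ↔ b = a - c from fun a b c => by constructor <;> intro h <;> linarith]
      rw [div_eq_iff hd2.ne']
      field_simp [hd.ne, show (5:ℚ) - t*8 ≠ 0 by linarith]
      ring

/-- `φ` and `ψ` are mutually inverse bijections of `ℚ`. -/
theorem phi_psi_inverse : ∀ x : ℚ, ψq (φq x) = x ∧ φq (ψq x) = x := by
  intro x
  have hx : x = (⌊x⌋:ℚ) + Int.fract x := (Int.floor_add_fract x).symm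
  constructor
  · conv_lhs => rw [hx]
    rw [psi_phi ⌊x⌋ (Int.fract x) (Int.fract_nonneg x) (Int.fract_lt_one x)]
    exact hx.symm
  · conv_lhs => rw [hx]
    rw [phi_psi ⌊x⌋ (Int.fract x) (Int.fract_nonneg x) (Int.fract_lt_one x)]
    exact hx.symm
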